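/- Assume the box-diagonal EPCAG setting and condition (bw). Fix N > 0, α ∈ (0,σ) and t₀ ∈ ℝ, and let z = (u,v) : ℝ → ℝᵏ × ℝ^{n−k} be a continuous function with ‖z(t)‖ ≤ N·exp(α(t−t₀)) for all t ≤ t₀. Then z is a solution of system (3*) on ℝ if and only if for every t ∈ ℝ: u(t) = ∫_{−∞}^{t} U(t,s)·g₊(s, z(s), z(β(s))) ds (the improper integral converging) and v(t) = V(t,t₀)v(t₀) + ∫_{t₀}^{t} V(t,s)·g₋(s, z(s), z(β(s))) ds. -/

import Mathlib

open Set Real Filter MeasureTheory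

noncomputable section

abbrev Ek (k : ℕ) : Type := EuclideanSpace ℝ (Fin k)

/-- `z` is a solution of the box-diagonal EPCAG system (3*) on the set `J`:
`z` is continuous on `J`, has the prescribed right derivative at every point of `J`,
and at points not of the form `θ i` it is differentiable (within `J`). -/
def SolOn {k m : ℕ} (θ : ℤ → ℝ) (β : ℝ → ℝ)
    (Bp : ℝ → Ek k →L[ℝ] Ek k) (Bm : ℝ → Ek m →L[ℝ] Ek m)
    (gp : ℝ → Ek k × Ek m → Ek k × Ek m → Ek k)
    (gm : ℝ → Ek k × Ek m → Ek k × Ek m → Ek m)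
    (z : ℝ → Ek k × Ek m) (J : Set ℝ) : Prop :=
  ContinuousOn z J ∧
  ∀ t ∈ J,
    (HasDerivWithinAt (fun s => (z s).1)
        (Bp t (z t).1 + gp t (z t) (z (β t))) (Ici t ∩ J) t ∧
      HasDerivWithinAt (fun s => (z s).2)
        (Bm t (z t).2 + gm t (z t) (z (β t))) (Ici t ∩ J) t) ∧
    (t ∉ Set.range θ →
      HasDerivWithinAt (fun s => (z s).1)
        (Bp t (z t).1 + gp t (z t) (z (β t))) J t ∧
      HasDerivWithinAt (fun s => (z s).2)
        (Bm t (z t).2 + gm t (z t) (z (β t))) J t)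

section ODEUnique
variable {E : Type*} [NormedAddCommGroup E] [NormedSpace ℝ E]

lemma ode_unique_global (v : ℝ → E → E) (C : NNReal) (hv : ∀ t, LipschitzWith C (v t))
    (f g : ℝ → E) (hf : ∀ t, HasDerivAt f (v t (f t)) t) (hg : ∀ t, HasDerivAt g (v t (g t)) t)
    (a : ℝ) (hfg : f a = g a) : ∀ t, f t = g t := by
  intro t
  have h1 : a ∈ Ioo (min a t - 1) (max a t + 1) :=
    ⟨lt_of_lt_of_le (sub_one_lt _) (min_le_left a t),
     lt_of_le_of_lt (le_max_left a t) (lt_add_one _)⟩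
  have h2 : t ∈ Icc (min a t - 1) (max a t + 1) :=
    ⟨le_trans (by linarith [min_le_right a t] : min a t - 1 ≤ min a t) (min_le_right a t),
     le_trans (le_max_right a t) (le_of_lt (lt_add_one _))⟩
  exact ODE_solution_unique_of_mem_Icc (v := v) (s := fun _ => univ)
    (fun t _ => (hv t).lipschitzOnWith) h1
    (fun x _ => (hf x).continuousAt.continuousWithinAt)
    (fun x _ => hf x) (fun _ _ => trivial)
    (fun x _ => (hg x).continuousAt.continuousWithinAt)
    (fun x _ => hg x) (fun _ _ => trivial) hfg h2

end ODEUnique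

set_option synthInstance.maxHeartbeats 400000
set_option maxHeartbeats 1000000
set_option linter.unusedSectionVars false





section Trans
variable {E : Type*} [NormedAddCommGroup E] [NormedSpace ℝ E] [CompleteSpace E]
variable {B : ℝ → E →L[ℝ] E} {U : ℝ → ℝ → E →L[ℝ] E} {μ : ℝ}

lemma trans_cocycle (hμ : ∀ t, ‖B t‖ ≤ μ)
    (hUid : ∀ s, U s s = ContinuousLinearMap.id ℝ E)
    (hUderiv : ∀ s t, HasDerivAt (fun r => U r s) ((B t).comp (U t s)) t) :
    ∀ t r s, U t s = (U t r).comp (U r s) := by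
  have hμ0 : 0 ≤ μ := le_trans (norm_nonneg _) (hμ 0)
  have hlip : ∀ t, LipschitzWith ⟨μ, hμ0⟩ ((fun (t : ℝ) (X : E →L[ℝ] E) => (B t).comp X) t) := by
    intro t
    apply LipschitzWith.of_dist_le_mul
    intro X Y
    rw [dist_eq_norm, dist_eq_norm]
    have h : (B t).comp X - (B t).comp Y = (B t).comp (X - Y) := by ext x; simp
    rw [h]
    exact le_trans ((B t).opNorm_comp_le _)
      (mul_le_mul_of_nonneg_right (hμ t) (norm_nonneg _))
  intro t r s
  exact ode_unique_global (fun t X => (B t).comp X) ⟨μ, hμ0⟩ hlip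
    (fun t => U t s) (fun t => (U t r).comp (U r s))
    (fun t => hUderiv s t)
    (fun t => by
      have h := (hUderiv r t).clm_comp (hasDerivAt_const t (U r s))
      simpa [ContinuousLinearMap.comp_assoc] using h)
    r (show U r s = (U r r).comp (U r s) by rw [hUid, ContinuousLinearMap.id_comp]) t

lemma trans_deriv_snd (hμ : ∀ t, ‖B t‖ ≤ μ)
    (hUid : ∀ s, U s s = ContinuousLinearMap.id ℝ E)
    (hUderiv : ∀ s t, HasDerivAt (fun r => U r s) ((B t).comp (U t s)) t)
    (t : ℝ) (s₀ : ℝ) : HasDerivAt (fun s => U t s) (-((U t s₀).comp (B s₀))) s₀ := by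
  have hcoc := trans_cocycle hμ hUid hUderiv
  have hone : ∀ a b : ℝ, (U a b) * (U b a) = 1 := by
    intro a b
    rw [ContinuousLinearMap.mul_def, ← hcoc a b a, hUid, ContinuousLinearMap.one_def]
  let xs : ℝ → (E →L[ℝ] E)ˣ := fun s =>
    { val := U s t, inv := U t s, val_inv := hone s t, inv_val := hone t s }
  have h1 := (hasFDerivAt_ringInverse (𝕜 := ℝ) (xs s₀)).comp_hasDerivAt s₀ (hUderiv t s₀)
  have h2 : (fun s => U t s) =ᶠ[nhds s₀] fun s => Ring.inverse (U s t) :=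
    Filter.Eventually.of_forall fun s => (Ring.inverse_unit (xs s)).symm
  have h3 := h1.congr_of_eventuallyEq h2
  refine h3.congr_deriv (Eq.symm ?_)
  show -((U t s₀).comp (B s₀)) = -(ContinuousLinearMap.mulLeftRight ℝ _ (↑(xs s₀)⁻¹ : E →L[ℝ] E) (↑(xs s₀)⁻¹ : E →L[ℝ] E)) ((B s₀).comp (U s₀ t))
  rw [ContinuousLinearMap.mulLeftRight_apply]
  show -((U t s₀).comp (B s₀)) = -(U t s₀ * ((B s₀) * (U s₀ t)) * U t s₀)
  rw [mul_assoc (U t s₀), mul_assoc (B s₀), hone s₀ t, mul_one]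
  rfl

end Trans



section Trans2
variable {E F : Type*} [NormedAddCommGroup E] [NormedSpace ℝ E] [CompleteSpace E]
  [NormedAddCommGroup F] [NormedSpace ℝ F] [CompleteSpace F]

lemma clm_apply_intervalIntegrable (w : ℝ → E →L[ℝ] F) (hw : Continuous w)
    {G : ℝ → E} (hGsm : StronglyMeasurable G)
    (hGb : ∀ a b : ℝ, ∃ C, ∀ s ∈ uIcc a b, ‖G s‖ ≤ C)
    (a b : ℝ) : IntervalIntegrable (fun s => w s (G s)) volume a b := by
  obtain ⟨C, hC⟩ := hGb a b
  obtain ⟨D, hD⟩ : ∃ D, ∀ s ∈ uIcc a b, ‖w s‖ ≤ D :=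
    isCompact_uIcc.exists_bound_of_continuousOn hw.continuousOn
  have hm : StronglyMeasurable fun s => w s (G s) :=
    isBoundedBilinearMap_apply.continuous.comp_stronglyMeasurable
      (hw.stronglyMeasurable.prodMk hGsm)
  rw [intervalIntegrable_iff]
  refine Integrable.mono' (g := fun _ => D * C)
    (integrableOn_const measure_Ioc_lt_top.ne) hm.aestronglyMeasurable.restrict ?_
  filter_upwards [ae_restrict_mem measurableSet_uIoc] with s hs
  have hs' : s ∈ uIcc a b := uIoc_subset_uIcc hs
  calc ‖w s (G s)‖ ≤ ‖w s‖ * ‖G s‖ := (w s).le_opNorm _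
    _ ≤ D * C := mul_le_mul (hD s hs') (hC s hs') (norm_nonneg _)
        (le_trans (norm_nonneg _) (hD s hs'))

end Trans2


section Trans3
variable {E : Type*} [NormedAddCommGroup E] [NormedSpace ℝ E] [CompleteSpace E]
variable {B : ℝ → E →L[ℝ] E} {U : ℝ → ℝ → E →L[ℝ] E} {μ : ℝ}

lemma voc (hμ : ∀ t, ‖B t‖ ≤ μ)
    (hUid : ∀ s, U s s = ContinuousLinearMap.id ℝ E)
    (hUderiv : ∀ s t, HasDerivAt (fun r => U r s) ((B t).comp (U t s)) t)
    {G : ℝ → E} (hGsm : StronglyMeasurable G)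
    (hGb : ∀ a b : ℝ, ∃ C, ∀ s ∈ uIcc a b, ‖G s‖ ≤ C)
    {x : ℝ → E} (hx : Continuous x)
    (hx' : ∀ s, HasDerivWithinAt x (B s (x s) + G s) (Ici s) s)
    (a t : ℝ) : x t = (U t a) (x a) + ∫ s in a..t, U t s (G s) := by
  have hw : Continuous fun s => U t s :=
    continuous_iff_continuousAt.2 fun s => (trans_deriv_snd hμ hUid hUderiv t s).continuousAt
  have hφc : Continuous fun s => U t s (x s) :=
    isBoundedBilinearMap_apply.continuous.comp (hw.prodMk hx)
  have hφ' : ∀ s, HasDerivWithinAt (fun r => U t r (x r)) (U t s (G s)) (Ici s) s := by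
    intro s
    have h := ((trans_deriv_snd hμ hUid hUderiv t s).hasDerivWithinAt).clm_apply (hx' s)
    convert h using 1
    simp only [ContinuousLinearMap.neg_apply, ContinuousLinearMap.comp_apply, map_add]
    abel
  have hint := clm_apply_intervalIntegrable (fun s => U t s) hw hGsm hGb
  have key : ∀ p q : ℝ, p ≤ q →
      ∫ s in p..q, U t s (G s) = U t q (x q) - U t p (x p) := fun p q hpq =>
    intervalIntegral.integral_eq_sub_of_hasDeriv_right_of_le hpq hφc.continuousOn
      (fun s _ => (hφ' s).mono Ioi_subset_Ici_self) (hint p q)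
  rcases le_total a t with h | h
  · rw [key a t h, hUid]
    simp only [ContinuousLinearMap.id_apply]
    abel
  · rw [intervalIntegral.integral_symm, key t a h, hUid]
    simp only [ContinuousLinearMap.id_apply]
    abel

lemma rep_hasDerivWithin (hμ : ∀ t, ‖B t‖ ≤ μ)
    (hUid : ∀ s, U s s = ContinuousLinearMap.id ℝ E)
    (hUderiv : ∀ s t, HasDerivAt (fun r => U r s) ((B t).comp (U t s)) t)
    {G : ℝ → E} (hGsm : StronglyMeasurable G)
    (hGb : ∀ a b : ℝ, ∃ C, ∀ s ∈ uIcc a b, ‖G s‖ ≤ C)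
    {x : ℝ → E} (b : ℝ) (hcw : ContinuousWithinAt G (Ici b) b)
    (hrep : ∀ t, x t = U t b (x b + ∫ s in b..t, U b s (G s))) :
    HasDerivWithinAt x (B b (x b) + G b) (Ici b) b := by
  have hw : Continuous fun s => U b s :=
    continuous_iff_continuousAt.2 fun s => (trans_deriv_snd hμ hUid hUderiv b s).continuousAt
  have hWcw : ContinuousWithinAt (fun s => U b s (G s)) (Ici b) b :=
    isBoundedBilinearMap_apply.continuous.continuousAt.comp_continuousWithinAt
      ((hw.continuousWithinAt).prodMk hcw)
  have hWm : StronglyMeasurable fun s => U b s (G s) :=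
    isBoundedBilinearMap_apply.continuous.comp_stronglyMeasurable
      (hw.stronglyMeasurable.prodMk hGsm)
  have hFTC : HasDerivWithinAt (fun r => ∫ s in b..r, U b s (G s)) (U b b (G b)) (Ici b) b :=
    intervalIntegral.integral_hasDerivWithinAt_right
      (clm_apply_intervalIntegrable (fun s => U b s) hw hGsm hGb b b)
      hWm.stronglyMeasurableAtFilter (hWcw.mono Ioi_subset_Ici_self)
  have hinner : HasDerivWithinAt (fun r => x b + ∫ s in b..r, U b s (G s))
      (U b b (G b)) (Ici b) b := hFTC.const_add (x b)
  have houter := ((hUderiv b b).hasDerivWithinAt).clm_apply hinner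
  have hfin := houter.congr (fun y _ => hrep y) (hrep b)
  convert hfin using 1
  rw [hUid]
  simp [intervalIntegral.integral_same]

lemma rep_hasDerivAt (hμ : ∀ t, ‖B t‖ ≤ μ)
    (hUid : ∀ s, U s s = ContinuousLinearMap.id ℝ E)
    (hUderiv : ∀ s t, HasDerivAt (fun r => U r s) ((B t).comp (U t s)) t)
    {G : ℝ → E} (hGsm : StronglyMeasurable G)
    (hGb : ∀ a b : ℝ, ∃ C, ∀ s ∈ uIcc a b, ‖G s‖ ≤ C)
    {x : ℝ → E} (b : ℝ) (hcw : ContinuousAt G b)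
    (hrep : ∀ t, x t = U t b (x b + ∫ s in b..t, U b s (G s))) :
    HasDerivAt x (B b (x b) + G b) b := by
  have hw : Continuous fun s => U b s :=
    continuous_iff_continuousAt.2 fun s => (trans_deriv_snd hμ hUid hUderiv b s).continuousAt
  have hWcw : ContinuousAt (fun s => U b s (G s)) b :=
    isBoundedBilinearMap_apply.continuous.continuousAt.comp
      ((hw.continuousAt).prodMk hcw)
  have hWm : StronglyMeasurable fun s => U b s (G s) :=
    isBoundedBilinearMap_apply.continuous.comp_stronglyMeasurable
      (hw.stronglyMeasurable.prodMk hGsm)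
  have hFTC : HasDerivAt (fun r => ∫ s in b..r, U b s (G s)) (U b b (G b)) b :=
    intervalIntegral.integral_hasDerivAt_right
      (clm_apply_intervalIntegrable (fun s => U b s) hw hGsm hGb b b)
      hWm.stronglyMeasurableAtFilter hWcw
  have hinner : HasDerivAt (fun r => x b + ∫ s in b..r, U b s (G s))
      (U b b (G b)) b := hFTC.const_add (x b)
  have houter := (hUderiv b b).clm_apply hinner
  have hfin := houter.congr_of_eventuallyEq (Filter.Eventually.of_forall fun y => hrep y)
  convert hfin using 1
  rw [hUid]
  simp [intervalIntegral.integral_same]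

end Trans3

section Misc

lemma cont_of_lip {F G : Type*} [NormedAddCommGroup F] [NormedAddCommGroup G] {L : ℝ}
    (g : ℝ → F → F → G) (hc : ∀ a b, Continuous fun t => g t a b)
    (hl : ∀ (t : ℝ) (a b a' b' : F), ‖g t a b - g t a' b'‖ ≤ L * (‖a - a'‖ + ‖b - b'‖)) :
    Continuous fun p : ℝ × F × F => g p.1 p.2.1 p.2.2 := by
  rw [continuous_iff_continuousAt]
  rintro ⟨t₀, a₀, b₀⟩
  have h1 : Tendsto (fun p : ℝ × F × F => g p.1 p.2.1 p.2.2 - g p.1 a₀ b₀)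
      (nhds (t₀, a₀, b₀)) (nhds 0) := by
    refine squeeze_zero_norm (a := fun p : ℝ × F × F => L * (‖p.2.1 - a₀‖ + ‖p.2.2 - b₀‖))
      (fun p => hl p.1 p.2.1 p.2.2 a₀ b₀) ?_
    have hcont : Continuous fun p : ℝ × F × F => L * (‖p.2.1 - a₀‖ + ‖p.2.2 - b₀‖) := by
      fun_prop
    have := hcont.tendsto (t₀, a₀, b₀)
    simpa using this
  have h2 : Tendsto (fun p : ℝ × F × F => g p.1 a₀ b₀) (nhds (t₀, a₀, b₀))
      (nhds (g t₀ a₀ b₀)) := ((hc a₀ b₀).tendsto t₀).comp (continuous_fst.tendsto _)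
  have h3 := h1.add h2
  simp only [sub_add_cancel, zero_add] at h3
  exact h3

lemma integrableOn_exp_mul_Iic' (d c : ℝ) (hd : 0 < d) :
    IntegrableOn (fun s => Real.exp (d * s)) (Iic c) := by
  have hder : ∀ s : ℝ, HasDerivAt (fun r => Real.exp (d * r) / d) (Real.exp (d * s)) s := by
    intro s
    have h1 : HasDerivAt (fun r : ℝ => d * r) d s := by
      simpa using (hasDerivAt_id s).const_mul d
    have h2 := h1.exp
    have h3 := h2.div_const d
    refine h3.congr_deriv ?_
    field_simp
  have hcalc : ∀ a : ℝ, (∫ s in a..c, ‖Real.exp (d * s)‖) ≤ Real.exp (d * c) / d := by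
    intro a
    have : ∫ s in a..c, ‖Real.exp (d * s)‖ = ∫ s in a..c, Real.exp (d * s) := by
      congr 1; ext s; exact abs_of_pos (Real.exp_pos _)
    rw [this, intervalIntegral.integral_eq_sub_of_hasDerivAt (fun s _ => hder s)
      ((Real.continuous_exp.comp (continuous_const.mul continuous_id)).intervalIntegrable a c)]
    have : 0 ≤ Real.exp (d * a) / d := le_of_lt (div_pos (Real.exp_pos _) hd)
    linarith
  exact integrableOn_Iic_of_intervalIntegral_norm_bounded (Real.exp (d * c) / d) c
    (fun i => ((Real.continuous_exp.comp
      (continuous_const.mul continuous_id)).integrableOn_Icc).mono_set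
        Ioc_subset_Icc_self)
    tendsto_id (Filter.Eventually.of_forall hcalc)

lemma integral_Iio_split {E : Type*} [NormedAddCommGroup E] [NormedSpace ℝ E] {f : ℝ → E}
    (hf : ∀ t : ℝ, IntegrableOn f (Iio t)) (b t : ℝ) :
    ∫ s in Iio t, f s = (∫ s in Iio b, f s) + ∫ s in b..t, f s := by
  have hIic : ∀ r : ℝ, IntegrableOn f (Iic r) := fun r =>
    (integrableOn_Iic_iff_integrableOn_Iio).2 (hf r)
  have key : ∀ p q : ℝ, p ≤ q →
      ∫ s in Iic q, f s = (∫ s in Iic p, f s) + ∫ s in p..q, f s := by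
    intro p q hpq
    rw [intervalIntegral.integral_of_le hpq, ← setIntegral_union (Iic_disjoint_Ioc le_rfl)
      measurableSet_Ioc (hIic p) ((hIic q).mono_set Ioc_subset_Iic_self),
      Iic_union_Ioc_eq_Iic hpq]
  rcases le_total b t with h | h
  · rw [← integral_Iic_eq_integral_Iio, ← integral_Iic_eq_integral_Iio, key b t h]
  · have := key t b h
    rw [← integral_Iic_eq_integral_Iio, ← integral_Iic_eq_integral_Iio,
      intervalIntegral.integral_symm]
    rw [this]
    abel

end Misc

set_option maxHeartbeats 2000000 in
theorem stmt_4
    (k m : ℕ) (hk : 1 ≤ k) (hm : 1 ≤ m)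
    (θ : ℤ → ℝ) (hθmono : StrictMono θ)
    (θb : ℝ) (hθb : 0 < θb) (hgap : ∀ i : ℤ, θ (i + 1) - θ i ≤ θb)
    (hθtop : Tendsto θ atTop atTop) (hθbot : Tendsto θ atBot atBot)
    (β : ℝ → ℝ) (hβ : ∀ (i : ℤ) (t : ℝ), θ i ≤ t → t < θ (i + 1) → β t = θ i)
    (Bp : ℝ → Ek k →L[ℝ] Ek k) (Bm : ℝ → Ek m →L[ℝ] Ek m)
    (hBp : Continuous Bp) (hBm : Continuous Bm)
    (U : ℝ → ℝ → Ek k →L[ℝ] Ek k) (V : ℝ → ℝ → Ek m →L[ℝ] Ek m)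
    (hUid : ∀ s : ℝ, U s s = ContinuousLinearMap.id ℝ (Ek k))
    (hVid : ∀ s : ℝ, V s s = ContinuousLinearMap.id ℝ (Ek m))
    (hUderiv : ∀ s t : ℝ, HasDerivAt (fun r => U r s) ((Bp t).comp (U t s)) t)
    (hVderiv : ∀ s t : ℝ, HasDerivAt (fun r => V r s) ((Bm t).comp (V t s)) t)
    (K σ : ℝ) (hK : 1 ≤ K) (hσ : 0 < σ)
    (hU : ∀ s t : ℝ, s ≤ t → ‖U t s‖ ≤ K * Real.exp (-σ * (t - s)))
    (hV : ∀ s t : ℝ, t ≤ s → ‖V t s‖ ≤ K * Real.exp (-σ * (s - t)))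
    (gp : ℝ → Ek k × Ek m → Ek k × Ek m → Ek k)
    (gm : ℝ → Ek k × Ek m → Ek k × Ek m → Ek m)
    (hgpc : ∀ zz ww, Continuous fun t => gp t zz ww)
    (hgmc : ∀ zz ww, Continuous fun t => gm t zz ww)
    (L : ℝ) (hL : 0 < L)
    (hlip : ∀ (t : ℝ) (z₁ w₁ z₂ w₂ : Ek k × Ek m),
      ‖gp t z₁ w₁ - gp t z₂ w₂‖ + ‖gm t z₁ w₁ - gm t z₂ w₂‖ ≤
        L * (‖z₁ - z₂‖ + ‖w₁ - w₂‖))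
    (hg0 : ∀ t : ℝ, gp t 0 0 = 0 ∧ gm t 0 0 = 0)
    (μ : ℝ) (hμ : ∀ t : ℝ, ‖Bp t‖ ≤ μ ∧ ‖Bm t‖ ≤ μ)
    (hbw : L * Real.exp (μ * θb) * θb *
        (1 + Real.exp (μ * θb) * (1 + L * θb) * Real.exp (Real.exp (μ * θb) * L * θb)) <
      Real.exp (-(μ * θb)))
    (N α t₀ : ℝ) (hN : 0 < N) (hα : 0 < α) (hασ : α < σ)
    (z : ℝ → Ek k × Ek m) (hzc : Continuous z)
    (hdecay : ∀ t : ℝ, t ≤ t₀ → ‖z t‖ ≤ N * Real.exp (α * (t - t₀))) :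
    SolOn θ β Bp Bm gp gm z Set.univ ↔
      ∀ t : ℝ,
        IntegrableOn (fun s => U t s (gp s (z s) (z (β s)))) (Iio t) ∧
        ((z t).1 = ∫ s in Iio t, U t s (gp s (z s) (z (β s)))) ∧
        (z t).2 = V t t₀ (z t₀).2 + ∫ s in t₀..t, V t s (gm s (z s) (z (β s))) := by
  have hμp : ∀ t, ‖Bp t‖ ≤ μ := fun t => (hμ t).1
  have hμm : ∀ t, ‖Bm t‖ ≤ μ := fun t => (hμ t).2
  have hK0 : (0:ℝ) < K := lt_of_lt_of_le one_pos hK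
  -- covering by the intervals [θ i, θ (i+1))
  have hcov : ∀ t : ℝ, ∃ i : ℤ, θ i ≤ t ∧ t < θ (i + 1) := by
    intro t
    have h1 : ∃ i : ℤ, θ i ≤ t := (hθbot.eventually (eventually_le_atBot t)).exists
    have h2 : ∃ j : ℤ, t < θ j := (hθtop.eventually (eventually_gt_atTop t)).exists
    obtain ⟨j, hj⟩ := h2
    obtain ⟨i, hi, hmax⟩ := Int.exists_greatest_of_bdd (P := fun i : ℤ => θ i ≤ t)
      ⟨j, fun n hn => le_of_lt (hθmono.lt_iff_lt.mp (lt_of_le_of_lt hn hj))⟩ h1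
    refine ⟨i, hi, ?_⟩
    by_contra hcon
    push_neg at hcon
    have := hmax (i + 1) hcon
    omega
  have hβle : ∀ t : ℝ, β t ≤ t := by
    intro t
    obtain ⟨i, h1, h2⟩ := hcov t
    rw [hβ i t h1 h2]; exact h1
  have hβge : ∀ t : ℝ, t - θb ≤ β t := by
    intro t
    obtain ⟨i, h1, h2⟩ := hcov t
    rw [hβ i t h1 h2]
    have := hgap i
    linarith
  have hβmeas : Measurable β := by
    intro A hA
    have h : β ⁻¹' A = ⋃ i ∈ {i : ℤ | θ i ∈ A}, Ico (θ i) (θ (i + 1)) := by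
      ext t
      simp only [mem_preimage, mem_iUnion, mem_Ico, mem_setOf_eq, exists_prop]
      constructor
      · intro ht
        obtain ⟨i, h1, h2⟩ := hcov t
        exact ⟨i, by rwa [← hβ i t h1 h2], h1, h2⟩
      · rintro ⟨i, hiA, h1, h2⟩
        rwa [hβ i t h1 h2]
    rw [h]
    exact MeasurableSet.biUnion (to_countable _) fun i _ => measurableSet_Ico
  set Gp : ℝ → Ek k := fun s => gp s (z s) (z (β s)) with hGpdef
  set Gm : ℝ → Ek m := fun s => gm s (z s) (z (β s)) with hGmdef
  -- joint continuity of gp, gm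
  have hgpcont : Continuous fun p : ℝ × (Ek k × Ek m) × (Ek k × Ek m) => gp p.1 p.2.1 p.2.2 :=
    cont_of_lip gp hgpc fun t a b a' b' =>
      le_trans (le_add_of_nonneg_right (norm_nonneg _)) (hlip t a b a' b')
  have hgmcont : Continuous fun p : ℝ × (Ek k × Ek m) × (Ek k × Ek m) => gm p.1 p.2.1 p.2.2 :=
    cont_of_lip gm hgmc fun t a b a' b' =>
      le_trans (le_add_of_nonneg_left (norm_nonneg _)) (hlip t a b a' b')
  have hmap : StronglyMeasurable fun s : ℝ => (s, (z s, z (β s))) :=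
    stronglyMeasurable_id.prodMk (hzc.stronglyMeasurable.prodMk
      (hzc.stronglyMeasurable.comp_measurable hβmeas))
  have hGpsm : StronglyMeasurable Gp := hgpcont.comp_stronglyMeasurable hmap
  have hGmsm : StronglyMeasurable Gm := hgmcont.comp_stronglyMeasurable hmap
  -- pointwise bounds
  have hGpn : ∀ s : ℝ, ‖Gp s‖ ≤ L * (‖z s‖ + ‖z (β s)‖) := by
    intro s
    have h := hlip s (z s) (z (β s)) 0 0
    rw [(hg0 s).1, (hg0 s).2] at h
    simp only [sub_zero] at h
    exact le_trans (le_add_of_nonneg_right (norm_nonneg _)) h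
  have hGmn : ∀ s : ℝ, ‖Gm s‖ ≤ L * (‖z s‖ + ‖z (β s)‖) := by
    intro s
    have h := hlip s (z s) (z (β s)) 0 0
    rw [(hg0 s).1, (hg0 s).2] at h
    simp only [sub_zero] at h
    exact le_trans (le_add_of_nonneg_left (norm_nonneg _)) h
  have hzbd : ∀ a b : ℝ, ∃ C, ∀ s ∈ uIcc a b, ‖z s‖ + ‖z (β s)‖ ≤ C := by
    intro a b
    obtain ⟨C, hC⟩ := (isCompact_Icc (a := a ⊓ b - θb) (b := a ⊔ b)).exists_bound_of_continuousOn
      hzc.continuousOn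
    refine ⟨C + C, fun s hs => ?_⟩
    have hs1 : a ⊓ b ≤ s := hs.1
    have hs2 : s ≤ a ⊔ b := hs.2
    have h1 : s ∈ Icc (a ⊓ b - θb) (a ⊔ b) := ⟨by linarith, hs2⟩
    have h2 : β s ∈ Icc (a ⊓ b - θb) (a ⊔ b) :=
      ⟨by have := hβge s; linarith, le_trans (hβle s) hs2⟩
    exact add_le_add (hC s h1) (hC (β s) h2)
  have hGpb : ∀ a b : ℝ, ∃ C, ∀ s ∈ uIcc a b, ‖Gp s‖ ≤ C := by
    intro a b
    obtain ⟨C, hC⟩ := hzbd a b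
    exact ⟨L * C, fun s hs => le_trans (hGpn s)
      (mul_le_mul_of_nonneg_left (hC s hs) hL.le)⟩
  have hGmb : ∀ a b : ℝ, ∃ C, ∀ s ∈ uIcc a b, ‖Gm s‖ ≤ C := by
    intro a b
    obtain ⟨C, hC⟩ := hzbd a b
    exact ⟨L * C, fun s hs => le_trans (hGmn s)
      (mul_le_mul_of_nonneg_left (hC s hs) hL.le)⟩
  -- continuity of the inhomogeneity
  have hβev : ∀ b : ℝ, ∀ᶠ s in nhdsWithin b (Ici b), β s = β b := by
    intro b
    obtain ⟨i, h1, h2⟩ := hcov b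
    have hmem : Iio (θ (i + 1)) ∈ nhdsWithin b (Ici b) := nhdsWithin_le_nhds (Iio_mem_nhds h2)
    filter_upwards [hmem, self_mem_nhdsWithin] with s hs1 hs2
    rw [hβ i s (le_trans h1 hs2) hs1, hβ i b h1 h2]
  have hβev' : ∀ b : ℝ, b ∉ Set.range θ → ∀ᶠ s in nhds b, β s = β b := by
    intro b hb
    obtain ⟨i, h1, h2⟩ := hcov b
    have h1' : θ i < b := lt_of_le_of_ne h1 fun h => hb ⟨i, h⟩
    filter_upwards [Ioo_mem_nhds h1' h2] with s hs
    rw [hβ i s hs.1.le hs.2, hβ i b h1 h2]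
  have hmapcw : ∀ b : ℝ, ContinuousWithinAt (fun s : ℝ => (s, (z s, z (β s)))) (Ici b) b := by
    intro b
    have hzβ : ContinuousWithinAt (fun s => z (β s)) (Ici b) b := by
      refine ContinuousWithinAt.congr_of_eventuallyEq
        (continuousWithinAt_const (b := z (β b))) ?_ rfl
      exact (hβev b).mono fun s hs => by show z (β s) = z (β b); rw [hs]
    exact (continuousWithinAt_id).prodMk ((hzc.continuousWithinAt).prodMk hzβ)
  have hmapca : ∀ b : ℝ, b ∉ Set.range θ →
      ContinuousAt (fun s : ℝ => (s, (z s, z (β s)))) b := by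
    intro b hb
    have hzβ : ContinuousAt (fun s => z (β s)) b := by
      refine ContinuousAt.congr_of_eventuallyEq
        (continuousAt_const : ContinuousAt (fun _ => z (β b)) b) ?_
      exact (hβev' b hb).mono fun s hs => by show z (β s) = z (β b); rw [hs]
    exact continuousAt_id.prodMk ((hzc.continuousAt).prodMk hzβ)
  have hGpcw : ∀ b : ℝ, ContinuousWithinAt Gp (Ici b) b := fun b =>
    hgpcont.continuousAt.comp_continuousWithinAt (hmapcw b)
  have hGmcw : ∀ b : ℝ, ContinuousWithinAt Gm (Ici b) b := fun b =>
    hgmcont.continuousAt.comp_continuousWithinAt (hmapcw b)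
  have hGpca : ∀ b : ℝ, b ∉ Set.range θ → ContinuousAt Gp b := fun b hb =>
    hgpcont.continuousAt.comp (hmapca b hb)
  have hGmca : ∀ b : ℝ, b ∉ Set.range θ → ContinuousAt Gm b := fun b hb =>
    hgmcont.continuousAt.comp (hmapca b hb)
  have hUscont : ∀ t : ℝ, Continuous fun s => U t s := fun t =>
    continuous_iff_continuousAt.2 fun s => (trans_deriv_snd hμp hUid hUderiv t s).continuousAt
  have hVscont : ∀ t : ℝ, Continuous fun s => V t s := fun t =>
    continuous_iff_continuousAt.2 fun s => (trans_deriv_snd hμm hVid hVderiv t s).continuousAt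
  have hUcoc := trans_cocycle hμp hUid hUderiv
  have hVcoc := trans_cocycle hμm hVid hVderiv
  have hu : Continuous fun s => (z s).1 := continuous_fst.comp hzc
  have hvz : Continuous fun s => (z s).2 := continuous_snd.comp hzc
  constructor
  · -- solution → integral equations
    intro hsol
    have hu' : ∀ s : ℝ, HasDerivWithinAt (fun r => (z r).1) (Bp s (z s).1 + Gp s) (Ici s) s := by
      intro s
      have h := ((hsol.2 s (mem_univ s)).1).1
      rwa [inter_univ] at h
    have hv' : ∀ s : ℝ, HasDerivWithinAt (fun r => (z r).2) (Bm s (z s).2 + Gm s) (Ici s) s := by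
      intro s
      have h := ((hsol.2 s (mem_univ s)).1).2
      rwa [inter_univ] at h
    have hrepu := voc hμp hUid hUderiv hGpsm hGpb hu hu'
    have hrepv := voc hμm hVid hVderiv hGmsm hGmb hvz hv'
    intro t
    have hmeas2 : StronglyMeasurable fun s => U t s (Gp s) :=
      isBoundedBilinearMap_apply.continuous.comp_stronglyMeasurable
        ((hUscont t).stronglyMeasurable.prodMk hGpsm)
    have hbnd : ∀ s : ℝ, s ≤ t → s ≤ t₀ →
        ‖U t s (Gp s)‖ ≤ 2 * K * L * N * Real.exp (-σ * t - α * t₀) * Real.exp ((σ + α) * s) := by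
      intro s hst hst₀
      have hβt₀ : β s ≤ t₀ := le_trans (hβle s) hst₀
      have hzs := hdecay s hst₀
      have hzβ : ‖z (β s)‖ ≤ N * Real.exp (α * (s - t₀)) := by
        refine le_trans (hdecay (β s) hβt₀) ?_
        have : α * (β s - t₀) ≤ α * (s - t₀) :=
          mul_le_mul_of_nonneg_left (by have := hβle s; linarith) hα.le
        exact mul_le_mul_of_nonneg_left (Real.exp_le_exp.2 this) hN.le
      calc ‖U t s (Gp s)‖ ≤ ‖U t s‖ * ‖Gp s‖ := (U t s).le_opNorm _
        _ ≤ (K * Real.exp (-σ * (t - s))) * (L * (‖z s‖ + ‖z (β s)‖)) := by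
            apply mul_le_mul (hU s t hst) (hGpn s) (norm_nonneg _)
            positivity
        _ ≤ (K * Real.exp (-σ * (t - s))) *
              (L * (N * Real.exp (α * (s - t₀)) + N * Real.exp (α * (s - t₀)))) := by
            have h0 : (0:ℝ) ≤ K * Real.exp (-σ * (t - s)) := by positivity
            apply mul_le_mul_of_nonneg_left _ h0
            apply mul_le_mul_of_nonneg_left _ hL.le
            exact add_le_add hzs hzβ
        _ = 2 * K * L * N * (Real.exp (-σ * (t - s)) * Real.exp (α * (s - t₀))) := by ring
        _ = 2 * K * L * N * Real.exp (-σ * t - α * t₀) * Real.exp ((σ + α) * s) := by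
            rw [← Real.exp_add, mul_assoc (2 * K * L * N), ← Real.exp_add]
            congr 2
            ring
    have hIio : IntegrableOn (fun s => U t s (Gp s)) (Iio t) := by
      have hct : t ⊓ t₀ ≤ t := inf_le_left
      have h1 : IntegrableOn (fun s => U t s (Gp s)) (Iic (t ⊓ t₀)) := by
        refine Integrable.mono'
          ((integrableOn_exp_mul_Iic' (σ + α) (t ⊓ t₀) (by linarith)).const_mul
            (2 * K * L * N * Real.exp (-σ * t - α * t₀)))
          hmeas2.aestronglyMeasurable.restrict ?_
        filter_upwards [ae_restrict_mem measurableSet_Iic] with s hs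
        have hs1 : s ≤ t := le_trans hs hct
        have hs2 : s ≤ t₀ := le_trans hs inf_le_right
        exact hbnd s hs1 hs2
      have h2 : IntegrableOn (fun s => U t s (Gp s)) (Ioc (t ⊓ t₀) t) :=
        (intervalIntegrable_iff_integrableOn_Ioc_of_le hct).1
          (clm_apply_intervalIntegrable (fun s => U t s) (hUscont t) hGpsm hGpb (t ⊓ t₀) t)
      refine (h1.union h2).mono_set ?_
      intro x hx
      rcases le_or_gt x (t ⊓ t₀) with h | h
      · exact Or.inl h
      · exact Or.inr ⟨h, le_of_lt hx⟩
    refine ⟨hIio, ?_, hrepv t₀ t⟩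
    -- improper integral formula for the first component
    have hlim1 : Tendsto (fun a => U t a ((z a).1)) atBot (nhds 0) := by
      apply squeeze_zero_norm'
        (a := fun a => K * N * Real.exp (-σ * t - α * t₀) * Real.exp ((σ + α) * a))
      · filter_upwards [eventually_le_atBot (t ⊓ t₀)] with a ha
        have ha1 : a ≤ t := le_trans ha inf_le_left
        have ha2 : a ≤ t₀ := le_trans ha inf_le_right
        calc ‖U t a ((z a).1)‖ ≤ ‖U t a‖ * ‖(z a).1‖ := (U t a).le_opNorm _
          _ ≤ (K * Real.exp (-σ * (t - a))) * (N * Real.exp (α * (a - t₀))) := by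
              apply mul_le_mul (hU a t ha1) (le_trans (norm_fst_le (z a)) (hdecay a ha2))
                (norm_nonneg _)
              positivity
          _ = K * N * (Real.exp (-σ * (t - a)) * Real.exp (α * (a - t₀))) := by ring
          _ = K * N * Real.exp (-σ * t - α * t₀) * Real.exp ((σ + α) * a) := by
              rw [← Real.exp_add, mul_assoc (K * N), ← Real.exp_add]
              congr 2
              ring
      · have h0 : Tendsto (fun a : ℝ => (σ + α) * a) atBot atBot := by
          apply Tendsto.const_mul_atBot (by linarith)
          exact tendsto_id
        have h1 := (Real.tendsto_exp_atBot.comp h0).const_mul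
          (K * N * Real.exp (-σ * t - α * t₀))
        simpa using h1
    have hlim2 : Tendsto (fun a => ∫ s in a..t, U t s (Gp s)) atBot
        (nhds (∫ s in Iio t, U t s (Gp s))) := by
      have h := intervalIntegral_tendsto_integral_Iic t
        ((integrableOn_Iic_iff_integrableOn_Iio).2 hIio) tendsto_id
      rwa [integral_Iic_eq_integral_Iio] at h
    have hconst : Tendsto (fun _ : ℝ => (z t).1) atBot
        (nhds (0 + ∫ s in Iio t, U t s (Gp s))) := by
      refine (hlim1.add hlim2).congr fun a => (hrepu a t).symm
    have := tendsto_nhds_unique tendsto_const_nhds hconst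
    rwa [zero_add] at this
  · -- integral equations → solution
    intro hR
    have hIio : ∀ t : ℝ, IntegrableOn (fun s => U t s (Gp s)) (Iio t) := fun t => (hR t).1
    have hIioAll : ∀ b t : ℝ, IntegrableOn (fun s => U b s (Gp s)) (Iio t) := by
      intro b t
      have h2 : (fun s => U b s (Gp s)) = fun s => (U b t) ((U t s) (Gp s)) := by
        funext s
        rw [hUcoc b t s]
        rfl
      rw [IntegrableOn, h2]
      exact (U b t).integrable_comp (hIio t)
    have hrepu : ∀ b t : ℝ, (z t).1 = U t b ((z b).1 + ∫ s in b..t, U b s (Gp s)) := by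
      intro b t
      have h1 : (z t).1 = ∫ s in Iio t, U t s (Gp s) := (hR t).2.1
      have h2 : (fun s => U t s (Gp s)) = fun s => (U t b) ((U b s) (Gp s)) := by
        funext s
        rw [hUcoc t b s]
        rfl
      rw [h2] at h1
      rw [(U t b).integral_comp_comm (hIioAll b t)] at h1
      rw [h1, integral_Iio_split (hIioAll b) b t, ← (hR b).2.1]
    have hVint : ∀ b a c : ℝ, IntervalIntegrable (fun s => V b s (Gm s)) volume a c :=
      fun b a c => clm_apply_intervalIntegrable (fun s => V b s) (hVscont b) hGmsm hGmb a c
    have hrepv : ∀ b t : ℝ, (z t).2 = V t b ((z b).2 + ∫ s in b..t, V b s (Gm s)) := by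
      intro b t
      have h1 := (hR t).2.2
      have h2 : (fun s => V t s (Gm s)) = fun s => (V t b) ((V b s) (Gm s)) := by
        funext s
        rw [hVcoc t b s]
        rfl
      rw [h2] at h1
      rw [(V t b).intervalIntegral_comp_comm (hVint b t₀ t)] at h1
      have h3 : V t t₀ ((z t₀).2) = V t b (V b t₀ ((z t₀).2)) := by
        rw [hVcoc t b t₀]
        rfl
      rw [h3, ← map_add] at h1
      rw [h1]
      congr 1
      rw [(hR b).2.2, add_assoc]
      congr 1
      exact (intervalIntegral.integral_add_adjacent_intervals (hVint b t₀ b) (hVint b b t)).symm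
    refine ⟨hzc.continuousOn, fun b _ => ⟨⟨?_, ?_⟩, fun hb => ⟨?_, ?_⟩⟩⟩
    · rw [inter_univ]
      exact rep_hasDerivWithin hμp hUid hUderiv hGpsm hGpb b (hGpcw b) (hrepu b)
    · rw [inter_univ]
      exact rep_hasDerivWithin hμm hVid hVderiv hGmsm hGmb b (hGmcw b) (hrepv b)
    · exact (rep_hasDerivAt hμp hUid hUderiv hGpsm hGpb b (hGpca b hb)
        (hrepu b)).hasDerivWithinAt
    · exact (rep_hasDerivAt hμm hVid hVderiv hGmsm hGmb b (hGmca b hb)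
        (hrepv b)).hasDerivWithinAt
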